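/- Let G be a transitive graph and suppose p > p_c(G) is such that the two-point function P_p(x ↔ y) tends to 0 as the distance between x and y tends to infinity. Then there exist vertices x, y such that with positive probability both x and y lie in infinite clusters and x is not connected to y; consequently percolation at p has more than one infinite cluster with positive probability. -/

import Mathlib

open MeasureTheory Filter Set
open scoped ENNReal

namespace SimpleGraph

variable {V : Type*}

/-- n-step transition kernel of the simple random walk. -/
noncomputable def srw (G : SimpleGraph V) [DecidableEq V] [∀ v, Fintype (G.neighborSet v)] :
    ℕ → V → V → ℝ
  | 0, x, y => if x = y then 1 else 0
  | n + 1, x, y => ∑ z ∈ G.neighborFinset x, (G.degree x : ℝ)⁻¹ * srw G n z y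

/-- auxiliary kernel of the non-backtracking walk: `nbwAux n prev cur y` is the probability that
the walk currently at `cur`, having just come from `prev`, is at `y` after `n` more steps. -/
noncomputable def nbwAux (G : SimpleGraph V) [DecidableEq V] [∀ v, Fintype (G.neighborSet v)] :
    ℕ → V → V → V → ℝ
  | 0, _, c, y => if c = y then 1 else 0
  | n + 1, prev, c, y =>
      ∑ z ∈ (G.neighborFinset c).erase prev, ((G.degree c : ℝ) - 1)⁻¹ * nbwAux G n c z y

/-- n-step transition kernel of the non-backtracking random walk (first step uniform). -/
noncomputable def nbw (G : SimpleGraph V) [DecidableEq V] [∀ v, Fintype (G.neighborSet v)] :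
    ℕ → V → V → ℝ
  | 0, x, y => if x = y then 1 else 0
  | n + 1, x, y => ∑ z ∈ G.neighborFinset x, (G.degree x : ℝ)⁻¹ * nbwAux G n x z y

/-- spectral radius of the simple random walk, `ρ = lim (p^{2n}(x,x))^{1/2n}`. -/
noncomputable def spectralRadius (G : SimpleGraph V) [DecidableEq V]
    [∀ v, Fintype (G.neighborSet v)] (x : V) : ℝ :=
  Filter.limsup (fun n : ℕ => (G.srw (2 * n) x x) ^ ((2 * n : ℝ))⁻¹) Filter.atTop

/-- a walk all of whose edges are open in the percolation configuration `ω`. -/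
def openWalk (G : SimpleGraph V) (ω : G.edgeSet → Bool) {x y : V} (w : G.Walk x y) : Prop :=
  ∀ e (he : e ∈ w.edges), ω ⟨e, w.edges_subset_edgeSet he⟩ = true

/-- `x` and `y` are connected by an open path. -/
def percConn (G : SimpleGraph V) (ω : G.edgeSet → Bool) (x y : V) : Prop :=
  ∃ w : G.Walk x y, G.openWalk ω w

/-- the open cluster of `x`. -/
def percCluster (G : SimpleGraph V) (ω : G.edgeSet → Bool) (x : V) : Set V :=
  {y | G.percConn ω x y}

/-- the event that the shortest open path between `x` and `y` has length exactly `n`. -/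
def shortestOpenConn (G : SimpleGraph V) (ω : G.edgeSet → Bool) (x y : V) (n : ℕ) : Prop :=
  (∃ w : G.Walk x y, w.IsPath ∧ w.length = n ∧ G.openWalk ω w) ∧
    ∀ w : G.Walk x y, G.openWalk ω w → n ≤ w.length

/-- `μ` is the Bernoulli(p) bond percolation measure: a probability measure under which the
states of edges are i.i.d., each open with probability `p`. -/
def IsBernoulliPercolation (G : SimpleGraph V) (p : ℝ)
    (μ : Measure (G.edgeSet → Bool)) : Prop :=
  IsProbabilityMeasure μ ∧
    ∀ (s : Finset G.edgeSet) (b : G.edgeSet → Bool),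
      μ {ω | ∀ e ∈ s, ω e = b e} = ∏ e ∈ s, ENNReal.ofReal (if b e then p else 1 - p)

/-- critical percolation probability, relative to a family `P p` of percolation measures. -/
noncomputable def percCritical (G : SimpleGraph V)
    (P : ℝ → Measure (G.edgeSet → Bool)) : ℝ :=
  sInf {p : ℝ | p ∈ Set.Icc (0:ℝ) 1 ∧ 0 < P p {ω | ∃ x, (G.percCluster ω x).Infinite}}

/-- `c_n(x)`: number of self-avoiding walks of length `n` from `x` to `y`. -/
noncomputable def sawCountTo (G : SimpleGraph V) (x y : V) (n : ℕ) : ℕ :=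
  Nat.card {w : G.Walk x y // w.IsPath ∧ w.length = n}

/-- `c_n`: number of self-avoiding walks of length `n` starting at `x`. -/
noncomputable def sawCount (G : SimpleGraph V) (x : V) (n : ℕ) : ℕ :=
  Nat.card {w : (y : V) × G.Walk x y // w.2.IsPath ∧ w.2.length = n}

/-- the connective constant `μ = inf_n c_n^{1/n}`. -/
noncomputable def connectiveConstant (G : SimpleGraph V) (x : V) : ℝ :=
  ⨅ n : ℕ+, (G.sawCount x n : ℝ) ^ (((n : ℕ) : ℝ))⁻¹

/-- the self-avoiding-walk two-point generating function `G_z(x)`. -/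
noncomputable def sawGen (G : SimpleGraph V) (x₀ : V) (z : ℝ) (x : V) : ℝ≥0∞ :=
  ∑' n : ℕ, (G.sawCountTo x₀ x n : ℝ≥0∞) * (ENNReal.ofReal z) ^ n

/-- vertex-transitivity. -/
def IsVertexTransitive (G : SimpleGraph V) : Prop :=
  ∀ x y : V, ∃ φ : G ≃g G, φ x = y

end SimpleGraph


set_option linter.unusedSectionVars false
set_option maxHeartbeats 1000000
section Stmt7Aux


open Finset

lemma harris_mono {ι : Type*} [DecidableEq ι] {q p : ℝ} (hq0 : 0 ≤ q) (hqp : q ≤ p) (hp1 : p ≤ 1)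
    (s : Finset ι) (T : Finset (ι → Bool))
    (hsupp : ∀ f ∈ T, ∀ i, i ∉ s → f i = false)
    (hup : ∀ f ∈ T, ∀ g : ι → Bool, (∀ i, f i = true → g i = true) →
      (∀ i, i ∉ s → g i = false) → g ∈ T) :
    ∑ f ∈ T, ∏ i ∈ s, (if f i then q else 1-q) ≤
      ∑ f ∈ T, ∏ i ∈ s, (if f i then p else 1-p) := by
  classical
  induction s using Finset.induction generalizing T with
  | empty => simp
  | @insert a s ha ih =>
    set T₀ : Finset (ι → Bool) := T.filter (fun f => f a = false) with hT₀
    set T₁ : Finset (ι → Bool) :=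
      (T.filter (fun f => f a = true)).image (fun f => Function.update f a false) with hT₁
    have mem_T₁ : ∀ g, g ∈ T₁ ↔ g a = false ∧ Function.update g a true ∈ T := by
      intro g
      constructor
      · rintro hg
        rw [hT₁, Finset.mem_image] at hg
        obtain ⟨f, hf, rfl⟩ := hg
        rw [Finset.mem_filter] at hf
        refine ⟨Function.update_self _ _ _, ?_⟩
        have : Function.update (Function.update f a false) a true = f := by
          funext i
          by_cases hia : i = a
          · subst hia; simp [hf.2]
          · simp [Function.update_of_ne hia]
        rw [this]; exact hf.1
      · rintro ⟨hga, hgT⟩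
        rw [hT₁, Finset.mem_image]
        refine ⟨Function.update g a true, ?_, ?_⟩
        · rw [Finset.mem_filter]; exact ⟨hgT, by simp⟩
        · funext i
          by_cases hia : i = a
          · subst hia; simp [hga]
          · simp [Function.update_of_ne hia]
    -- splitting of the sums
    have split : ∀ r : ℝ,
        ∑ f ∈ T, ∏ i ∈ insert a s, (if f i then r else 1-r)
          = r * (∑ g ∈ T₁, ∏ i ∈ s, (if g i then r else 1-r))
            + (1-r) * (∑ g ∈ T₀, ∏ i ∈ s, (if g i then r else 1-r)) := by
      intro r
      rw [← Finset.sum_filter_add_sum_filter_not T (fun f => f a = true)]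
      congr 1
      · rw [hT₁, Finset.sum_image ?inj]
        case inj =>
          intro f hf f' hf' hff'
          rw [Finset.mem_coe, Finset.mem_filter] at hf hf'
          funext i
          by_cases hia : i = a
          · subst hia; rw [hf.2, hf'.2]
          · have := congrFun hff' i
            simpa [Function.update_of_ne hia] using this
        rw [Finset.mul_sum]
        refine Finset.sum_congr rfl fun f hf => ?_
        rw [Finset.mem_filter] at hf
        rw [Finset.prod_insert ha, hf.2, if_pos rfl]
        congr 1
        refine Finset.prod_congr rfl fun i hi => ?_
        have hia : i ≠ a := fun h => ha (h ▸ hi)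
        rw [Function.update_of_ne hia]
      · rw [Finset.mul_sum]
        refine Finset.sum_congr ?_ fun f hf => ?_
        · rw [hT₀]; congr 1; funext f; simp
        · rw [hT₀, Finset.mem_filter] at hf
          rw [Finset.prod_insert ha, hf.2, if_neg (by simp)]
    -- properties of T₀ and T₁
    have hsupp₁ : ∀ f ∈ T₁, ∀ i, i ∉ s → f i = false := by
      intro g hg i his
      rcases (mem_T₁ g).1 hg with ⟨hga, hgT⟩
      by_cases hia : i = a
      · subst hia; exact hga
      · have : i ∉ insert a s := by simp [hia, his]
        have := hsupp _ hgT i this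
        rwa [Function.update_of_ne hia] at this
    have hup₁ : ∀ f ∈ T₁, ∀ g : ι → Bool, (∀ i, f i = true → g i = true) →
        (∀ i, i ∉ s → g i = false) → g ∈ T₁ := by
      intro f hf g hfg hgs
      rcases (mem_T₁ f).1 hf with ⟨hfa, hfT⟩
      refine (mem_T₁ g).2 ⟨hgs a ha, ?_⟩
      refine hup _ hfT _ ?_ ?_
      · intro i hi
        by_cases hia : i = a
        · subst hia; simp
        · rw [Function.update_of_ne hia] at hi ⊢; exact hfg i hi
      · intro i hi
        have hia : i ≠ a := by intro h; exact hi (h ▸ Finset.mem_insert_self a s)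
        rw [Function.update_of_ne hia]
        exact hgs i (fun h => hi (Finset.mem_insert_of_mem h))
    have hsupp₀ : ∀ f ∈ T₀, ∀ i, i ∉ s → f i = false := by
      intro f hf i his
      rw [hT₀, Finset.mem_filter] at hf
      by_cases hia : i = a
      · subst hia; exact hf.2
      · exact hsupp _ hf.1 i (by simp [hia, his])
    have hup₀ : ∀ f ∈ T₀, ∀ g : ι → Bool, (∀ i, f i = true → g i = true) →
        (∀ i, i ∉ s → g i = false) → g ∈ T₀ := by
      intro f hf g hfg hgs
      rw [hT₀, Finset.mem_filter] at hf ⊢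
      refine ⟨hup _ hf.1 _ hfg ?_, hgs a ha⟩
      intro i hi
      have hia : i ≠ a := by intro h; exact hi (h ▸ Finset.mem_insert_self a s)
      exact hgs i (fun h => hi (Finset.mem_insert_of_mem h))
    have hsub : T₀ ⊆ T₁ := by
      intro f hf
      rw [hT₀, Finset.mem_filter] at hf
      refine (mem_T₁ f).2 ⟨hf.2, ?_⟩
      refine hup _ hf.1 _ ?_ ?_
      · intro i hi
        by_cases hia : i = a
        · subst hia; simp
        · rwa [Function.update_of_ne hia]
      · intro i hi
        have hia : i ≠ a := by intro h; exact hi (h ▸ Finset.mem_insert_self a s)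
        rw [Function.update_of_ne hia]
        exact hsupp _ hf.1 i hi
    -- nonnegativity and subset sums
    have hq1 : q ≤ 1 := le_trans hqp hp1
    have hp0 : 0 ≤ p := le_trans hq0 hqp
    have nonneg : ∀ (T' : Finset (ι → Bool)),
        0 ≤ ∑ g ∈ T', ∏ i ∈ s, (if g i then p else 1-p) := by
      intro T'
      refine Finset.sum_nonneg fun g _ => Finset.prod_nonneg fun i _ => ?_
      split <;> linarith
    have hmono₀₁ : ∑ g ∈ T₀, ∏ i ∈ s, (if g i then p else 1-p)
        ≤ ∑ g ∈ T₁, ∏ i ∈ s, (if g i then p else 1-p) := by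
      refine Finset.sum_le_sum_of_subset_of_nonneg hsub fun g _ _ => ?_
      refine Finset.prod_nonneg fun i _ => ?_
      split <;> linarith
    have ih₁ := ih T₁ hsupp₁ hup₁
    have ih₀ := ih T₀ hsupp₀ hup₀
    rw [split q, split p]
    nlinarith [nonneg T₀, nonneg T₁]


open MeasureTheory Finset

section Cyl
variable {V : Type*} [DecidableEq V] (G : SimpleGraph V)

/-- extension of a boolean function on a finite edge set by `false`. -/
noncomputable def ext0 (s : Finset G.edgeSet) (g : {e // e ∈ s} → Bool) : G.edgeSet → Bool :=
  fun e => if h : e ∈ s then g ⟨e, h⟩ else false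

def cylSet (s : Finset G.edgeSet) (b : G.edgeSet → Bool) : Set (G.edgeSet → Bool) :=
  {ω | ∀ e ∈ s, ω e = b e}

lemma measurableSet_cylSet (s : Finset G.edgeSet) (b : G.edgeSet → Bool) :
    MeasurableSet (cylSet G s b) := by
  have : cylSet G s b = ⋂ e ∈ s, (fun ω : G.edgeSet → Bool => ω e) ⁻¹' {b e} := by
    ext ω; simp [cylSet]
  rw [this]
  exact MeasurableSet.biInter s.countable_toSet fun e _ =>
    (measurable_pi_apply e) (measurableSet_singleton (b e))

/-- the set of boolean assignments on `s` whose zero-extension lies in `A`. -/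
noncomputable def detFinset (s : Finset G.edgeSet) (A : Set (G.edgeSet → Bool)) :
    Finset ({e // e ∈ s} → Bool) :=
  @Finset.filter _ (fun g => ext0 G s g ∈ A) (Classical.decPred _) Finset.univ

lemma mem_detFinset {s : Finset G.edgeSet} {A : Set (G.edgeSet → Bool)}
    {g : {e // e ∈ s} → Bool} : g ∈ detFinset G s A ↔ ext0 G s g ∈ A := by
  simp [detFinset, Finset.mem_filter]

/-- a set determined by the edges in `s`. -/
def DetBy (s : Finset G.edgeSet) (A : Set (G.edgeSet → Bool)) : Prop :=
  ∀ ω ω' : G.edgeSet → Bool, (∀ e ∈ s, ω e = ω' e) → ω ∈ A → ω' ∈ A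

lemma ext0_mem_of_mem {s : Finset G.edgeSet} {A : Set (G.edgeSet → Bool)}
    (hdet : DetBy G s A) {ω : G.edgeSet → Bool} (hω : ω ∈ A) :
    ext0 G s (fun e => ω e) ∈ A := by
  refine hdet ω _ (fun e he => ?_) hω
  simp [ext0, he]

lemma det_decomp {s : Finset G.edgeSet} {A : Set (G.edgeSet → Bool)} (hdet : DetBy G s A) :
    A = ⋃ g ∈ detFinset G s A, cylSet G s (ext0 G s g) := by
  ext ω
  simp only [Set.mem_iUnion, exists_prop]
  constructor
  · intro hω
    refine ⟨fun e => ω e, (mem_detFinset G).2 (ext0_mem_of_mem G hdet hω), fun e he => ?_⟩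
    simp [ext0, he]
  · rintro ⟨g, hg, hcyl⟩
    exact hdet _ _ (fun e he => (hcyl e he).symm) ((mem_detFinset G).1 hg)

lemma cylSet_disjoint {s : Finset G.edgeSet} {g g' : {e // e ∈ s} → Bool} (h : g ≠ g') :
    Disjoint (cylSet G s (ext0 G s g)) (cylSet G s (ext0 G s g')) := by
  rw [Set.disjoint_iff_inter_eq_empty]
  by_contra hne
  obtain ⟨ω, h1, h2⟩ := Set.nonempty_iff_ne_empty.2 hne
  refine h (funext fun e => ?_)
  have e1 := h1 e.1 e.2
  have e2 := h2 e.1 e.2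
  simp only [ext0, dif_pos e.2, Subtype.coe_eta] at e1 e2
  exact e1.symm.trans e2

lemma measurableSet_of_detBy {s : Finset G.edgeSet} {A : Set (G.edgeSet → Bool)}
    (hdet : DetBy G s A) : MeasurableSet A := by
  rw [det_decomp G hdet]
  exact (detFinset G s A).measurableSet_biUnion fun g _ => measurableSet_cylSet G s _

lemma measure_detBy {μ : Measure (G.edgeSet → Bool)} {r : ℝ}
    (hBer : ∀ (s : Finset G.edgeSet) (b : G.edgeSet → Bool),
      μ {ω | ∀ e ∈ s, ω e = b e} = ∏ e ∈ s, ENNReal.ofReal (if b e then r else 1 - r))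
    (hr0 : 0 ≤ r) (hr1 : r ≤ 1)
    {s : Finset G.edgeSet} {A : Set (G.edgeSet → Bool)} (hdet : DetBy G s A) :
    μ A = ENNReal.ofReal
      (∑ g ∈ detFinset G s A, ∏ e ∈ s, (if ext0 G s g e then r else 1 - r)) := by
  have hw : ∀ (b : G.edgeSet → Bool) (e : G.edgeSet), (0:ℝ) ≤ (if b e then r else 1 - r) := by
    intro b e; split <;> linarith
  conv_lhs => rw [det_decomp G hdet]
  rw [measure_biUnion_finset ?hd (fun g _ => measurableSet_cylSet G s _),
    ENNReal.ofReal_sum_of_nonneg (fun g _ => Finset.prod_nonneg fun e _ => hw _ e)]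
  case hd =>
    intro g hg g' hg' hne
    exact cylSet_disjoint G hne
  refine Finset.sum_congr rfl fun g _ => ?_
  have hcyl : cylSet G s (ext0 G s g) = {ω | ∀ e ∈ s, ω e = ext0 G s g e} := rfl
  rw [hcyl, hBer s (ext0 G s g), ENNReal.ofReal_prod_of_nonneg (fun e _ => hw _ e)]

lemma measure_le_of_detBy {μq μp : Measure (G.edgeSet → Bool)} {q p : ℝ}
    (hq0 : 0 ≤ q) (hqp : q ≤ p) (hp1 : p ≤ 1)
    (hBq : ∀ (s : Finset G.edgeSet) (b : G.edgeSet → Bool),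
      μq {ω | ∀ e ∈ s, ω e = b e} = ∏ e ∈ s, ENNReal.ofReal (if b e then q else 1 - q))
    (hBp : ∀ (s : Finset G.edgeSet) (b : G.edgeSet → Bool),
      μp {ω | ∀ e ∈ s, ω e = b e} = ∏ e ∈ s, ENNReal.ofReal (if b e then p else 1 - p))
    {s : Finset G.edgeSet} {A : Set (G.edgeSet → Bool)} (hdet : DetBy G s A)
    (hmon : ∀ ω ω' : G.edgeSet → Bool, (∀ e, ω e = true → ω' e = true) → ω ∈ A → ω' ∈ A) :
    μq A ≤ μp A := by
  classical
  rw [measure_detBy G hBq hq0 (le_trans hqp hp1) hdet,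
    measure_detBy G hBp (le_trans hq0 hqp) hp1 hdet]
  refine ENNReal.ofReal_le_ofReal ?_
  have hinj : ∀ g ∈ detFinset G s A, ∀ g' ∈ detFinset G s A,
      ext0 G s g = ext0 G s g' → g = g' := by
    intro g _ g' _ h
    funext e
    have := congrFun h e.1
    simp only [ext0] at this
    rw [dif_pos e.2] at this
    simpa using this
  have hrw : ∀ r : ℝ,
      ∑ g ∈ detFinset G s A, ∏ e ∈ s, (if ext0 G s g e then r else 1 - r)
        = ∑ f ∈ (detFinset G s A).image (ext0 G s), ∏ e ∈ s, (if f e then r else 1 - r) := by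
    intro r
    rw [Finset.sum_image hinj]
  rw [hrw q, hrw p]
  refine harris_mono hq0 hqp hp1 s _ ?_ ?_
  · rintro f hf i hi
    rw [Finset.mem_image] at hf
    obtain ⟨g, hg, rfl⟩ := hf
    simp [ext0, hi]
  · rintro f hf g hfg hgs
    rw [Finset.mem_image] at hf ⊢
    obtain ⟨g₀, hg₀, rfl⟩ := hf
    have hgA : g ∈ A := hmon _ _ hfg ((mem_detFinset G).1 hg₀)
    have hgeq : ext0 G s (fun e => g e.1) = g := by
      funext e
      by_cases he : e ∈ s
      · simp [ext0, he]
      · simp [ext0, he, hgs e he]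
    exact ⟨fun e => g e.1, (mem_detFinset G).2 (by rwa [hgeq]), hgeq⟩

end Cyl


open MeasureTheory Finset SimpleGraph

section Graph
variable {V : Type*} [DecidableEq V] (G : SimpleGraph V) [∀ v, Fintype (G.neighborSet v)]

lemma openWalk_nil (ω : G.edgeSet → Bool) (x : V) : G.openWalk ω (Walk.nil : G.Walk x x) := by
  intro e he
  simp [SimpleGraph.Walk.edges_nil] at he

lemma percConn_self (ω : G.edgeSet → Bool) (x : V) : G.percConn ω x x :=
  ⟨Walk.nil, openWalk_nil G ω x⟩

lemma openWalk_cons {ω : G.edgeSet → Bool} {x y z : V} {h : G.Adj x y} {w : G.Walk y z}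
    (hw : G.openWalk ω (Walk.cons h w)) : G.openWalk ω w := by
  intro e he
  exact hw e (by rw [Walk.edges_cons]; exact List.mem_cons_of_mem _ he)

lemma openWalk_cons_head {ω : G.edgeSet → Bool} {x y z : V} {h : G.Adj x y} {w : G.Walk y z}
    (hw : G.openWalk ω (Walk.cons h w)) : ω ⟨s(x, y), h⟩ = true := by
  have := hw s(x, y) (by rw [Walk.edges_cons]; exact List.mem_cons_self)
  exact this

/-- balls are finite in a locally finite connected graph. -/
lemma ball_finite (hconn : G.Connected) (x : V) (n : ℕ) :
    {y : V | G.dist x y ≤ n}.Finite := by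
  have key : ∀ n : ℕ, {y : V | ∃ w : G.Walk y x, w.length ≤ n}.Finite := by
    intro n
    induction n with
    | zero =>
      refine Set.Finite.subset (Set.finite_singleton x) ?_
      rintro y ⟨w, hw⟩
      have := Walk.eq_of_length_eq_zero (Nat.le_zero.1 hw)
      simp [this]
    | succ n ih =>
      have : {y : V | ∃ w : G.Walk y x, w.length ≤ n + 1} ⊆
          {y : V | ∃ w : G.Walk y x, w.length ≤ n} ∪
            ⋃ z ∈ {y : V | ∃ w : G.Walk y x, w.length ≤ n}, G.neighborSet z := by
        rintro y ⟨w, hw⟩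
        cases w with
        | nil => exact Or.inl ⟨Walk.nil, Nat.zero_le n⟩
        | cons h w' =>
          refine Or.inr ?_
          rw [Set.mem_iUnion₂]
          rw [Walk.length_cons] at hw
          exact ⟨_, ⟨w', Nat.succ_le_succ_iff.1 hw⟩, h.symm⟩
      refine Set.Finite.subset (ih.union (ih.biUnion fun z _ => (G.neighborSet z).toFinite)) this
  refine Set.Finite.subset (key n) ?_
  intro y hy
  obtain ⟨w, hw⟩ := hconn.exists_walk_length_eq_dist x y
  exact ⟨w.reverse, by rw [Walk.length_reverse, hw]; exact hy⟩

lemma countable_of_connected (hconn : G.Connected) : Countable V := by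
  obtain ⟨x⟩ : Nonempty V := hconn.nonempty
  rw [← Set.countable_univ_iff]
  have : (Set.univ : Set V) = ⋃ n : ℕ, {y : V | G.dist x y ≤ n} := by
    ext y
    simp only [Set.mem_univ, Set.mem_iUnion, true_iff]
    exact ⟨G.dist x y, by simp⟩
  rw [this]
  exact Set.countable_iUnion fun n => (ball_finite G hconn x n).countable

/-- the event that `x` is connected by an open path to some vertex at distance `> n`. -/
def outEvent (x : V) (n : ℕ) : Set (G.edgeSet → Bool) :=
  {ω | ∃ y, ¬ G.dist x y ≤ n ∧ G.percConn ω x y}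

/-- the cluster of x is infinite iff it exits every ball. -/
lemma cluster_infinite_iff (hconn : G.Connected) (x : V) :
    {ω : G.edgeSet → Bool | (G.percCluster ω x).Infinite} = ⋂ n : ℕ, outEvent G x n := by
  ext ω
  simp only [Set.mem_setOf_eq, Set.mem_iInter]
  constructor
  · intro hinf n
    have hball := ball_finite G hconn x n
    have : ¬ (G.percCluster ω x ⊆ {y : V | G.dist x y ≤ n}) := by
      intro hsub
      exact hinf (Set.Finite.subset hball hsub)
    obtain ⟨y, hy1, hy2⟩ := Set.not_subset.1 this
    exact ⟨y, hy2, hy1⟩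
  · intro h
    intro hfin
    set m := hfin.toFinset.sup (G.dist x) with hm
    obtain ⟨y, hy1, hy2⟩ := h m
    refine hy1 ?_
    have : y ∈ hfin.toFinset := by rwa [Set.Finite.mem_toFinset]
    exact Finset.le_sup (f := G.dist x) this

/-- truncation of an open walk at the first exit of the ball of radius `n`. -/
lemma exit_walk (hconn : G.Connected) (x : V) (n : ℕ) :
    ∀ {a y : V} (w : G.Walk a y) (ω : G.edgeSet → Bool), G.openWalk ω w →
      G.dist x a ≤ n → ¬ G.dist x y ≤ n →
      ∃ y', ¬ G.dist x y' ≤ n ∧ ∃ w' : G.Walk a y', G.openWalk ω w' ∧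
        ∀ v ∈ w'.support, G.dist x v ≤ n + 1 := by
  intro a y w
  induction w with
  | nil =>
    intro ω _ ha hy
    exact absurd ha hy
  | @cons a z y h w ih =>
    intro ω hopen ha hy
    by_cases hz : G.dist x z ≤ n
    · obtain ⟨y', hy', w', hw', hsupp⟩ := ih ω (openWalk_cons G hopen) hz hy
      refine ⟨y', hy', Walk.cons h w', ?_, ?_⟩
      · intro e he
        rw [Walk.edges_cons] at he
        rcases List.mem_cons.1 he with he | he
        · subst he; exact openWalk_cons_head G hopen
        · exact hw' e he
      · intro v hv
        rw [Walk.support_cons] at hv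
        rcases List.mem_cons.1 hv with hv | hv
        · subst hv; exact le_trans ha (Nat.le_succ n)
        · exact hsupp v hv
    · refine ⟨z, hz, Walk.cons h Walk.nil, ?_, ?_⟩
      · intro e he
        rw [Walk.edges_cons, Walk.edges_nil] at he
        rcases List.mem_cons.1 he with he | he
        · subst he; exact openWalk_cons_head G hopen
        · simp at he
      · intro v hv
        rw [Walk.support_cons, Walk.support_nil] at hv
        rcases List.mem_cons.1 hv with hv | hv
        · subst hv; exact le_trans ha (Nat.le_succ n)
        · have hvz : v = z := by simpa using hv
          subst hvz
          calc G.dist x v ≤ G.dist x a + G.dist a v := hconn.dist_triangle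
            _ ≤ n + 1 := by
                have : G.dist a v ≤ 1 := by
                  refine le_trans (dist_le (Walk.cons h Walk.nil)) ?_
                  simp
                omega

/-- the finite set of edges with both endpoints within distance `n+1` of `x`. -/
noncomputable def exitEdges (hconn : G.Connected) (x : V) (n : ℕ) : Finset G.edgeSet :=
  Set.Finite.toFinset (s := {e : G.edgeSet | ∀ v ∈ (e : Sym2 V), G.dist x v ≤ n + 1}) <| by
    refine Set.Finite.subset (Set.Finite.preimage (Subtype.val_injective.injOn)
      (((ball_finite G hconn x (n+1)).toFinset.sym2).finite_toSet)) ?_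
    intro e he
    simp only [Set.mem_preimage, Finset.mem_coe, Finset.mem_sym2_iff]
    intro v hv
    rw [Set.Finite.mem_toFinset]
    exact he v hv

lemma mem_exitEdges (hconn : G.Connected) (x : V) (n : ℕ) (e : G.edgeSet) :
    e ∈ exitEdges G hconn x n ↔ ∀ v ∈ (e : Sym2 V), G.dist x v ≤ n + 1 := by
  rw [exitEdges, Set.Finite.mem_toFinset]
  rfl

end Graph


open MeasureTheory Finset SimpleGraph

section Graph2
variable {V : Type*} [DecidableEq V] (G : SimpleGraph V) [∀ v, Fintype (G.neighborSet v)]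

lemma support_of_edges {a b : V} {w : G.Walk a b} {e : Sym2 V} (he : e ∈ w.edges) :
    ∀ v ∈ e, v ∈ w.support := by
  induction e using Sym2.ind with
  | _ u₁ u₂ =>
    intro v hv
    rcases Sym2.mem_iff.1 hv with rfl | rfl
    · exact w.fst_mem_support_of_mem_edges he
    · exact w.snd_mem_support_of_mem_edges he

lemma detBy_outEvent (hconn : G.Connected) (x : V) (n : ℕ) :
    DetBy G (exitEdges G hconn x n) (outEvent G x n) := by
  rintro ω ω' hagree ⟨y, hy, w, hw⟩
  obtain ⟨y', hy', w', hw', hsupp⟩ := exit_walk G hconn x n w ω hw (by rw [SimpleGraph.dist_self]; exact Nat.zero_le n) hy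
  refine ⟨y', hy', w', ?_⟩
  intro e he
  have hmem : (⟨e, w'.edges_subset_edgeSet he⟩ : G.edgeSet) ∈ exitEdges G hconn x n := by
    rw [mem_exitEdges]
    intro v hv
    exact hsupp v (support_of_edges G he v hv)
  rw [← hagree _ hmem]
  exact hw' e he

lemma measurableSet_outEvent (hconn : G.Connected) (x : V) (n : ℕ) :
    MeasurableSet (outEvent G x n) :=
  measurableSet_of_detBy G (detBy_outEvent G hconn x n)

lemma mono_outEvent (x : V) (n : ℕ) :
    ∀ ω ω' : G.edgeSet → Bool, (∀ e, ω e = true → ω' e = true) →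
      ω ∈ outEvent G x n → ω' ∈ outEvent G x n := by
  rintro ω ω' hle ⟨y, hy, w, hw⟩
  exact ⟨y, hy, w, fun e he => hle _ (hw e he)⟩

lemma antitone_outEvent (x : V) : Antitone (fun n => outEvent G x n) := by
  intro n m hnm ω hω
  obtain ⟨y, hy, hc⟩ := hω
  exact ⟨y, fun h => hy (le_trans h hnm), hc⟩

lemma measurableSet_clusterInf (hconn : G.Connected) (x : V) :
    MeasurableSet {ω : G.edgeSet → Bool | (G.percCluster ω x).Infinite} := by
  rw [cluster_infinite_iff G hconn x]
  exact MeasurableSet.iInter fun n => measurableSet_outEvent G hconn x n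

lemma theta_le (hconn : G.Connected) {μq μp : Measure (G.edgeSet → Bool)} {q p : ℝ}
    (hq0 : 0 ≤ q) (hqp : q ≤ p) (hp1 : p ≤ 1)
    (hBq : ∀ (s : Finset G.edgeSet) (b : G.edgeSet → Bool),
      μq {ω | ∀ e ∈ s, ω e = b e} = ∏ e ∈ s, ENNReal.ofReal (if b e then q else 1 - q))
    (hBp : ∀ (s : Finset G.edgeSet) (b : G.edgeSet → Bool),
      μp {ω | ∀ e ∈ s, ω e = b e} = ∏ e ∈ s, ENNReal.ofReal (if b e then p else 1 - p))
    [IsProbabilityMeasure μp] (x : V) :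
    μq {ω : G.edgeSet → Bool | (G.percCluster ω x).Infinite} ≤
      μp {ω : G.edgeSet → Bool | (G.percCluster ω x).Infinite} := by
  rw [cluster_infinite_iff G hconn x,
    Antitone.measure_iInter (antitone_outEvent G x)
      (fun n => (measurableSet_outEvent G hconn x n).nullMeasurableSet)
      ⟨0, measure_ne_top μp _⟩]
  refine le_iInf fun n => ?_
  refine le_trans (measure_mono (Set.iInter_subset _ n)) ?_
  exact measure_le_of_detBy G hq0 hqp hp1 hBq hBp (detBy_outEvent G hconn x n)
    (mono_outEvent G x n)

end Graph2


open MeasureTheory Finset SimpleGraph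

section Inv
variable {V : Type*} [DecidableEq V] (G : SimpleGraph V) [∀ v, Fintype (G.neighborSet v)]

lemma measSpace_eq :
    (MeasurableSpace.pi : MeasurableSpace (G.edgeSet → Bool)) =
      MeasurableSpace.generateFrom {A | ∃ s b, A = cylSet G s b} := by
  apply le_antisymm
  · rw [MeasurableSpace.pi]
    refine iSup_le fun e => ?_
    intro A hA
    rw [MeasurableSpace.measurableSet_comap] at hA
    obtain ⟨t, -, rfl⟩ := hA
    have hcases : t = ∅ ∨ t = {true} ∨ t = {false} ∨ t = Set.univ := by
      by_cases ht : true ∈ t <;> by_cases hf : false ∈ t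
      · right; right; right; ext b; cases b <;> simp [ht, hf]
      · right; left; ext b; cases b <;> simp [ht, hf]
      · right; right; left; ext b; cases b <;> simp [ht, hf]
      · left; ext b; cases b <;> simp [ht, hf]
    rcases hcases with rfl | rfl | rfl | rfl
    · rw [Set.preimage_empty]; exact @MeasurableSet.empty _ (MeasurableSpace.generateFrom _)
    · have : (fun ω : G.edgeSet → Bool => ω e) ⁻¹' {true} = cylSet G {e} (fun _ => true) := by
        ext ω; simp [cylSet]
      rw [this]
      exact MeasurableSpace.measurableSet_generateFrom ⟨{e}, _, rfl⟩
    · have : (fun ω : G.edgeSet → Bool => ω e) ⁻¹' {false} = cylSet G {e} (fun _ => false) := by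
        ext ω; simp [cylSet]
      rw [this]
      exact MeasurableSpace.measurableSet_generateFrom ⟨{e}, _, rfl⟩
    · rw [Set.preimage_univ]; exact @MeasurableSet.univ _ (MeasurableSpace.generateFrom _)
  · rw [MeasurableSpace.generateFrom_le_iff]
    rintro A ⟨s, b, rfl⟩
    exact measurableSet_cylSet G s b

lemma isPiSystem_cyl : IsPiSystem {A : Set (G.edgeSet → Bool) | ∃ s b, A = cylSet G s b} := by
  rintro A ⟨s, b, rfl⟩ B ⟨s', b', rfl⟩ hne
  obtain ⟨ω₀, h1, h2⟩ := hne
  refine ⟨s ∪ s', ω₀, ?_⟩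
  ext ω
  simp only [cylSet, Set.mem_inter_iff, Set.mem_setOf_eq, Finset.mem_union]
  constructor
  · rintro ⟨hA, hB⟩ e he
    rcases he with he | he
    · rw [hA e he, ← h1 e he]
    · rw [hB e he, ← h2 e he]
  · intro h
    exact ⟨fun e he => (h e (Or.inl he)).trans (h1 e he),
      fun e he => (h e (Or.inr he)).trans (h2 e he)⟩

variable {μ : Measure (G.edgeSet → Bool)} {r : ℝ}

lemma map_measurable (φ : G ≃g G) :
    Measurable (fun ω : G.edgeSet → Bool => fun e => ω (φ.mapEdgeSet e)) :=
  measurable_pi_lambda _ fun e => measurable_pi_apply _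

lemma map_preserves [IsProbabilityMeasure μ]
    (hBer : ∀ (s : Finset G.edgeSet) (b : G.edgeSet → Bool),
      μ {ω | ∀ e ∈ s, ω e = b e} = ∏ e ∈ s, ENNReal.ofReal (if b e then r else 1 - r))
    (φ : G ≃g G) :
    Measure.map (fun ω : G.edgeSet → Bool => fun e => ω (φ.mapEdgeSet e)) μ = μ := by
  set T : G.edgeSet ≃ G.edgeSet := φ.mapEdgeSet with hT
  set Φ : (G.edgeSet → Bool) → (G.edgeSet → Bool) := fun ω => fun e => ω (T e) with hΦ
  have hmeas : Measurable Φ := map_measurable G φ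
  haveI : IsProbabilityMeasure (Measure.map Φ μ) :=
    Measure.isProbabilityMeasure_map hmeas.aemeasurable
  refine ext_of_generate_finite _ (measSpace_eq G) (isPiSystem_cyl G) ?_ ?_
  · rintro A ⟨s, b, rfl⟩
    rw [Measure.map_apply hmeas (measurableSet_cylSet G s b)]
    have hpre : Φ ⁻¹' cylSet G s b = cylSet G (s.image T) (fun e' => b (T.symm e')) := by
      ext ω
      simp only [cylSet, Set.mem_preimage, Set.mem_setOf_eq, hΦ]
      constructor
      · intro h e' he'
        rw [Finset.mem_image] at he'
        obtain ⟨e, he, rfl⟩ := he'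
        rw [Equiv.symm_apply_apply]
        exact h e he
      · intro h e he
        have := h (T e) (Finset.mem_image_of_mem T he)
        rwa [Equiv.symm_apply_apply] at this
    rw [hpre]
    have h1 : μ (cylSet G (s.image T) fun e' => b (T.symm e'))
        = ∏ e' ∈ s.image T, ENNReal.ofReal (if b (T.symm e') then r else 1 - r) :=
      hBer (s.image T) _
    have h2 : μ (cylSet G s b) = ∏ e ∈ s, ENNReal.ofReal (if b e then r else 1 - r) :=
      hBer s b
    rw [h1, h2, Finset.prod_image (fun e _ e' _ h => T.injective h)]
    refine Finset.prod_congr rfl fun e _ => ?_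
    rw [Equiv.symm_apply_apply]
  · simp

lemma percConn_comp (φ : G ≃g G) (ω : G.edgeSet → Bool) (x z : V) :
    G.percConn (fun e => ω (φ.mapEdgeSet e)) x z ↔ G.percConn ω (φ x) (φ z) := by
  constructor
  · rintro ⟨w, hw⟩
    refine ⟨w.map φ.toHom, ?_⟩
    intro e' he'
    rw [Walk.edges_map, List.mem_map] at he'
    obtain ⟨e, he, rfl⟩ := he'
    have h2 : ω (φ.mapEdgeSet ⟨e, w.edges_subset_edgeSet he⟩) = true := hw e he
    convert h2 using 2; rfl
  · rintro ⟨w', hw'⟩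
    refine ⟨(w'.map φ.symm.toHom).copy (φ.symm_apply_apply x) (φ.symm_apply_apply z), ?_⟩
    intro e he
    rw [Walk.edges_copy, Walk.edges_map, List.mem_map] at he
    obtain ⟨e', he', rfl⟩ := he
    have h2 : ω ⟨e', w'.edges_subset_edgeSet he'⟩ = true := hw' e' he'
    beta_reduce
    convert h2 using 2
    refine Subtype.ext ?_
    show Sym2.map (⇑φ.toHom) (Sym2.map (⇑φ.symm.toHom) e') = e'
    rw [Sym2.map_map]
    have hcomp : (⇑φ.toHom : V → V) ∘ (⇑φ.symm.toHom) = id := by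
      funext v; exact φ.apply_symm_apply v
    rw [hcomp, Sym2.map_id]
    rfl

lemma cluster_comp (φ : G ≃g G) (ω : G.edgeSet → Bool) (x : V) :
    G.percCluster (fun e => ω (φ.mapEdgeSet e)) x = φ ⁻¹' (G.percCluster ω (φ x)) := by
  ext z
  exact percConn_comp G φ ω x z

lemma measure_cluster_eq [IsProbabilityMeasure μ]
    (hBer : ∀ (s : Finset G.edgeSet) (b : G.edgeSet → Bool),
      μ {ω | ∀ e ∈ s, ω e = b e} = ∏ e ∈ s, ENNReal.ofReal (if b e then r else 1 - r))
    (hconn : G.Connected) (φ : G ≃g G) (x : V) :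
    μ {ω : G.edgeSet → Bool | (G.percCluster ω (φ x)).Infinite} =
      μ {ω : G.edgeSet → Bool | (G.percCluster ω x).Infinite} := by
  set Φ : (G.edgeSet → Bool) → (G.edgeSet → Bool) := fun ω => fun e => ω (φ.mapEdgeSet e) with hΦ
  have hpre : Φ ⁻¹' {ω : G.edgeSet → Bool | (G.percCluster ω x).Infinite} =
      {ω : G.edgeSet → Bool | (G.percCluster ω (φ x)).Infinite} := by
    ext ω
    simp only [Set.mem_preimage, Set.mem_setOf_eq, hΦ]
    rw [cluster_comp G φ ω x]
    have hsurj : Function.Surjective (⇑φ) := φ.toEquiv.surjective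
    have hinj : Function.Injective (⇑φ) := φ.toEquiv.injective
    constructor
    · intro h
      have := Set.Infinite.image hinj.injOn h
      rwa [Set.image_preimage_eq _ hsurj] at this
    · intro h
      exact Set.Infinite.preimage h (by rw [hsurj.range_eq]; exact Set.subset_univ _)
  conv_lhs => rw [← hpre]
  rw [← Measure.map_apply (map_measurable G φ) (measurableSet_clusterInf G hconn x),
    map_preserves G hBer φ]

end Inv


open MeasureTheory Finset SimpleGraph

lemma bonferroni {Ω : Type*} [MeasurableSpace Ω] (μ : Measure Ω) {ι : Type*} [DecidableEq ι]
    (I : Finset ι) (A : ι → Set Ω) (hA : ∀ i, MeasurableSet (A i)) :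
    ∑ i ∈ I, μ (A i) ≤ μ (⋃ i ∈ I, A i) + ∑ pr ∈ I.offDiag, μ (A pr.1 ∩ A pr.2) := by
  induction I using Finset.induction with
  | empty => simp
  | @insert a I ha ih =>
    rw [Finset.sum_insert ha]
    have hUm : MeasurableSet (⋃ i ∈ I, A i) :=
      MeasurableSet.biUnion I.countable_toSet fun i _ => hA i
    have key : μ (A a) + μ (⋃ i ∈ I, A i) ≤
        μ (⋃ i ∈ insert a I, A i) + ∑ i ∈ I, μ (A a ∩ A i) := by
      have h1 : μ (A a ∪ ⋃ i ∈ I, A i) + μ (A a ∩ ⋃ i ∈ I, A i)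
          = μ (A a) + μ (⋃ i ∈ I, A i) := measure_union_add_inter _ hUm
      rw [← h1, ← Finset.set_biUnion_insert]
      refine add_le_add le_rfl ?_
      have h2 : A a ∩ ⋃ i ∈ I, A i = ⋃ i ∈ I, A a ∩ A i := by
        rw [Set.inter_iUnion₂]
      rw [h2]
      exact measure_biUnion_finset_le I _
    calc μ (A a) + ∑ i ∈ I, μ (A i)
        ≤ μ (A a) + (μ (⋃ i ∈ I, A i) + ∑ pr ∈ I.offDiag, μ (A pr.1 ∩ A pr.2)) :=
          add_le_add le_rfl ih
      _ = (μ (A a) + μ (⋃ i ∈ I, A i)) + ∑ pr ∈ I.offDiag, μ (A pr.1 ∩ A pr.2) := by ring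
      _ ≤ (μ (⋃ i ∈ insert a I, A i) + ∑ i ∈ I, μ (A a ∩ A i))
            + ∑ pr ∈ I.offDiag, μ (A pr.1 ∩ A pr.2) := add_le_add key le_rfl
      _ = μ (⋃ i ∈ insert a I, A i)
            + (∑ pr ∈ ({a} ×ˢ I), μ (A pr.1 ∩ A pr.2) + ∑ pr ∈ I.offDiag, μ (A pr.1 ∩ A pr.2)) := by
          rw [Finset.sum_product, Finset.sum_singleton]
          ring
      _ ≤ μ (⋃ i ∈ insert a I, A i) + ∑ pr ∈ (insert a I).offDiag, μ (A pr.1 ∩ A pr.2) := by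
          refine add_le_add le_rfl ?_
          rw [← Finset.sum_union ?hdisj]
          case hdisj =>
            rw [Finset.disjoint_left]
            rintro ⟨u, v⟩ hu hv
            rw [Finset.mem_product, Finset.mem_singleton] at hu
            rw [Finset.mem_offDiag] at hv
            exact ha (hu.1 ▸ hv.1)
          refine Finset.sum_le_sum_of_subset ?_
          intro pr hpr
          rw [Finset.mem_union] at hpr
          rw [Finset.mem_offDiag]
          rcases hpr with hpr | hpr
          · rw [Finset.mem_product, Finset.mem_singleton] at hpr
            refine ⟨hpr.1 ▸ Finset.mem_insert_self a I, Finset.mem_insert_of_mem hpr.2, ?_⟩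
            rw [hpr.1]
            rintro rfl
            exact ha hpr.2
          · rw [Finset.mem_offDiag] at hpr
            exact ⟨Finset.mem_insert_of_mem hpr.1, Finset.mem_insert_of_mem hpr.2.1, hpr.2.2⟩

section Graph3
variable {V : Type*} [DecidableEq V] (G : SimpleGraph V) [∀ v, Fintype (G.neighborSet v)]

lemma exists_far_finset (hconn : G.Connected) [Infinite V] (R N : ℕ) :
    ∃ T : Finset V, T.card = N ∧ ∀ x ∈ T, ∀ y ∈ T, x ≠ y → R ≤ G.dist x y := by
  induction N with
  | zero => exact ⟨∅, rfl, by simp⟩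
  | succ N ih =>
    obtain ⟨T, hcard, hT⟩ := ih
    have hfin : (⋃ x ∈ T, {y : V | G.dist x y ≤ R}).Finite :=
      Set.Finite.biUnion T.finite_toSet fun x _ => ball_finite G hconn x R
    obtain ⟨v, hv⟩ := Set.Infinite.nonempty (Set.Finite.infinite_compl hfin)
    have hvT : v ∉ T := by
      intro hvT
      exact hv (Set.mem_biUnion hvT (by rw [Set.mem_setOf_eq, SimpleGraph.dist_self]; exact Nat.zero_le R))
    have hvfar : ∀ x ∈ T, R ≤ G.dist x v := by
      intro x hx
      by_contra h
      push_neg at h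
      exact hv (Set.mem_biUnion hx (le_of_lt h))
    refine ⟨insert v T, by rw [Finset.card_insert_of_notMem hvT, hcard], ?_⟩
    intro x hx y hy hxy
    rcases Finset.mem_insert.1 hx with hxv | hx
    · rcases Finset.mem_insert.1 hy with hyv | hy
      · exact absurd (hxv.trans hyv.symm) hxy
      · rw [hxv, SimpleGraph.dist_comm]; exact hvfar y hy
    · rcases Finset.mem_insert.1 hy with hyv | hy
      · rw [hyv]; exact hvfar x hx
      · exact hT x hx y hy hxy

lemma one_mem_perc (hconn : G.Connected) [Infinite V] [Countable V]
    {μ : Measure (G.edgeSet → Bool)} [IsProbabilityMeasure μ]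
    (hBer : ∀ (s : Finset G.edgeSet) (b : G.edgeSet → Bool),
      μ {ω | ∀ e ∈ s, ω e = b e} = ∏ e ∈ s, ENNReal.ofReal (if b e then (1:ℝ) else 1 - 1)) :
    0 < μ {ω : G.edgeSet → Bool | ∃ x, (G.percCluster ω x).Infinite} := by
  haveI : Countable (Sym2 V) := Quotient.countable
  obtain ⟨x₀⟩ : Nonempty V := hconn.nonempty
  have hnull : μ (⋃ e : G.edgeSet, {ω : G.edgeSet → Bool | ω e = false}) = 0 := by
    refine measure_iUnion_null fun e => ?_
    have heq : {ω : G.edgeSet → Bool | ω e = false}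
        = {ω : G.edgeSet → Bool | ∀ e' ∈ ({e} : Finset G.edgeSet), ω e' = (fun _ => false) e'} := by
      ext ω; simp
    rw [heq, hBer {e} (fun _ => false)]
    simp
  have hsub : {ω : G.edgeSet → Bool | ∃ x, (G.percCluster ω x).Infinite}ᶜ ⊆
      ⋃ e : G.edgeSet, {ω : G.edgeSet → Bool | ω e = false} := by
    intro ω hω
    by_contra hmem
    simp only [Set.mem_iUnion, Set.mem_setOf_eq, not_exists] at hmem
    have hopen : ∀ e : G.edgeSet, ω e = true := by
      intro e
      cases h : ω e
      · exact absurd h (hmem e)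
      · rfl
    refine hω ⟨x₀, ?_⟩
    have : G.percCluster ω x₀ = Set.univ := by
      ext u
      simp only [Set.mem_univ, iff_true]
      obtain ⟨w⟩ := hconn x₀ u
      exact ⟨w, fun e he => hopen _⟩
    rw [this]
    exact Set.infinite_univ
  have hcompl : μ ({ω : G.edgeSet → Bool | ∃ x, (G.percCluster ω x).Infinite}ᶜ) = 0 :=
    measure_mono_null hsub hnull
  have : (1:ℝ≥0∞) ≤ μ {ω : G.edgeSet → Bool | ∃ x, (G.percCluster ω x).Infinite} := by
    have huniv := measure_union_le (μ := μ)
      {ω : G.edgeSet → Bool | ∃ x, (G.percCluster ω x).Infinite}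
      {ω : G.edgeSet → Bool | ∃ x, (G.percCluster ω x).Infinite}ᶜ
    rw [Set.union_compl_self, measure_univ, hcompl, add_zero] at huniv
    exact huniv
  exact lt_of_lt_of_le zero_lt_one this

end Graph3

end Stmt7Aux

/-- on a transitive graph, if `p > p_c` and the two-point function tends to zero at
large distances, then with positive probability two fixed far-away vertices lie in distinct
infinite clusters; consequently there is more than one infinite cluster with positive
probability. -/
theorem stmt_7 {V : Type*} [DecidableEq V] (G : SimpleGraph V)
    [∀ v, Fintype (G.neighborSet v)] [Infinite V] (hconn : G.Connected)
    (htrans : G.IsVertexTransitive)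
    (P : ℝ → MeasureTheory.Measure (G.edgeSet → Bool))
    (hP : ∀ q ∈ Set.Icc (0:ℝ) 1, G.IsBernoulliPercolation q (P q))
    (p : ℝ) (hp : p ∈ Set.Icc (0:ℝ) 1) (hpc : G.percCritical P < p)
    (hdecay : ∀ ε : ℝ, 0 < ε → ∃ R : ℕ, ∀ x y : V, R ≤ G.dist x y →
      P p {ω | G.percConn ω x y} ≤ ENNReal.ofReal ε) :
    (∃ x y : V,
        0 < P p {ω | (G.percCluster ω x).Infinite ∧ (G.percCluster ω y).Infinite ∧
          ¬ G.percConn ω x y}) ∧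
      0 < P p {ω | ∃ a b : V, (G.percCluster ω a).Infinite ∧ (G.percCluster ω b).Infinite ∧
          ¬ G.percConn ω a b} := by
  
  classical
  obtain ⟨hp0, hp1⟩ := hp
  haveI hPp : IsProbabilityMeasure (P p) := (hP p ⟨hp0, hp1⟩).1
  have hBp := (hP p ⟨hp0, hp1⟩).2
  haveI : Countable V := countable_of_connected G hconn
  -- a parameter q < p with percolation
  have h1S : (1:ℝ) ∈ {q : ℝ | q ∈ Set.Icc (0:ℝ) 1 ∧
      0 < P q {ω | ∃ x, (G.percCluster ω x).Infinite}} := by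
    refine ⟨⟨zero_le_one, le_refl 1⟩, ?_⟩
    haveI := (hP 1 ⟨zero_le_one, le_refl 1⟩).1
    exact one_mem_perc G hconn (hP 1 ⟨zero_le_one, le_refl 1⟩).2
  have hpc' : sInf {q : ℝ | q ∈ Set.Icc (0:ℝ) 1 ∧
      0 < P q {ω | ∃ x, (G.percCluster ω x).Infinite}} < p := hpc
  obtain ⟨q, hqS, hqp⟩ := exists_lt_of_csInf_lt ⟨1, h1S⟩ hpc'
  haveI hPq : IsProbabilityMeasure (P q) := (hP q hqS.1).1
  have hBq := (hP q hqS.1).2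
  -- a vertex with positive theta at q
  have hposq : ∃ x₀, 0 < P q {ω | (G.percCluster ω x₀).Infinite} := by
    by_contra h
    push_neg at h
    have hz : P q {ω | ∃ x, (G.percCluster ω x).Infinite} = 0 := by
      rw [Set.setOf_exists]
      exact measure_iUnion_null fun x => le_zero_iff.1 (h x)
    have h2 := hqS.2
    rw [hz] at h2
    exact lt_irrefl 0 h2
  obtain ⟨x₀, hx₀⟩ := hposq
  have hθpos : 0 < P p {ω | (G.percCluster ω x₀).Infinite} :=
    lt_of_lt_of_le hx₀ (theta_le G hconn hqS.1.1 hqp.le hp1 hBq hBp x₀)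
  set θ := P p {ω | (G.percCluster ω x₀).Infinite} with hθdef
  have hθ1 : θ ≤ 1 := prob_le_one
  have hinv : ∀ y : V, P p {ω | (G.percCluster ω y).Infinite} = θ := by
    intro y
    obtain ⟨φ, hφ⟩ := htrans x₀ y
    rw [hθdef, ← hφ]
    exact measure_cluster_eq G hBp hconn φ x₀
  -- choose n with n·θ ≥ 3
  obtain ⟨n, hn⟩ : ∃ n : ℕ, (3:ℝ≥0∞) ≤ (n:ℝ≥0∞) * θ := by
    have hθne : θ ≠ 0 := hθpos.ne'
    have h3θ : (3:ℝ≥0∞)/θ ≠ ∞ := (ENNReal.div_lt_top (by norm_num) hθne).ne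
    obtain ⟨n, hn⟩ := ENNReal.exists_nat_gt h3θ
    refine ⟨n, ?_⟩
    rw [ENNReal.div_lt_iff (Or.inl hθne) (Or.inl (measure_ne_top _ _))] at hn
    exact hn.le
  have h3n : (3:ℕ) ≤ n := by
    have h1 : (3:ℝ≥0∞) ≤ (n:ℝ≥0∞) := le_trans hn (by
      calc (n:ℝ≥0∞) * θ ≤ (n:ℝ≥0∞) * 1 := mul_le_mul_right hθ1 _
        _ = (n:ℝ≥0∞) := mul_one _)
    exact_mod_cast h1
  set K : ℕ := n * n with hKdef
  have hKpos : 0 < K := by rw [hKdef]; exact Nat.mul_pos (by omega) (by omega)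
  have hK0 : ((K:ℕ):ℝ≥0∞) ≠ 0 := Nat.cast_ne_zero.2 (Nat.pos_iff_ne_zero.1 hKpos)
  have hKtop : ((K:ℕ):ℝ≥0∞) ≠ ∞ := ENNReal.natCast_ne_top K
  set m : ℕ := 2 * K with hmdef
  have hm0 : 0 < m := by omega
  set ε : ℝ := ((m:ℝ))⁻¹ with hεdef
  have hεpos : 0 < ε := inv_pos.2 (Nat.cast_pos.2 hm0)
  obtain ⟨R, hR⟩ := hdecay ε hεpos
  obtain ⟨T, hTcard, hTfar⟩ := exists_far_finset G hconn R n
  have hofε : ENNReal.ofReal ε = ((m:ℕ):ℝ≥0∞)⁻¹ := by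
    rw [hεdef, ENNReal.ofReal_inv_of_pos (Nat.cast_pos.2 hm0), ENNReal.ofReal_natCast]
  -- Bonferroni
  have hsum : ∑ v ∈ T, P p {ω | (G.percCluster ω v).Infinite} = (n:ℝ≥0∞) * θ := by
    rw [Finset.sum_congr rfl fun v _ => hinv v, Finset.sum_const, hTcard, nsmul_eq_mul]
  have hbon := bonferroni (P p) T (fun v => {ω | (G.percCluster ω v).Infinite})
    (fun v => measurableSet_clusterInf G hconn v)
  rw [hsum] at hbon
  have hU1 : P p (⋃ v ∈ T, {ω | (G.percCluster ω v).Infinite}) ≤ 1 := prob_le_one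
  have hbig : (2:ℝ≥0∞) ≤ ∑ pr ∈ T.offDiag,
      P p ({ω | (G.percCluster ω pr.1).Infinite} ∩ {ω | (G.percCluster ω pr.2).Infinite}) := by
    have h1 : (3:ℝ≥0∞) ≤ 1 + ∑ pr ∈ T.offDiag,
        P p ({ω | (G.percCluster ω pr.1).Infinite} ∩ {ω | (G.percCluster ω pr.2).Infinite}) :=
      le_trans hn (le_trans hbon (add_le_add hU1 le_rfl))
    have h2 : (1:ℝ≥0∞) + 2 ≤ 1 + ∑ pr ∈ T.offDiag,
        P p ({ω | (G.percCluster ω pr.1).Infinite} ∩ {ω | (G.percCluster ω pr.2).Infinite}) := by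
      rw [show (1:ℝ≥0∞) + 2 = 3 by norm_num]
      exact h1
    exact (ENNReal.add_le_add_iff_left ENNReal.one_ne_top).1 h2
  -- extract a far pair carrying mass
  obtain ⟨pr, hprT, hpr⟩ : ∃ pr ∈ T.offDiag, ((K:ℕ):ℝ≥0∞)⁻¹ ≤
      P p ({ω | (G.percCluster ω pr.1).Infinite} ∩ {ω | (G.percCluster ω pr.2).Infinite}) := by
    by_contra h
    push_neg at h
    have hcardle : T.offDiag.card ≤ K := by
      rw [Finset.offDiag_card, hTcard, hKdef]
      omega
    have hSig : ∑ pr ∈ T.offDiag,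
        P p ({ω | (G.percCluster ω pr.1).Infinite} ∩ {ω | (G.percCluster ω pr.2).Infinite})
          ≤ 1 := by
      calc ∑ pr ∈ T.offDiag,
          P p ({ω | (G.percCluster ω pr.1).Infinite} ∩ {ω | (G.percCluster ω pr.2).Infinite})
          ≤ ∑ _pr ∈ T.offDiag, ((K:ℕ):ℝ≥0∞)⁻¹ :=
            Finset.sum_le_sum fun pr hpr => (h pr hpr).le
        _ = (T.offDiag.card : ℝ≥0∞) * ((K:ℕ):ℝ≥0∞)⁻¹ := by
            rw [Finset.sum_const, nsmul_eq_mul]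
        _ ≤ ((K:ℕ):ℝ≥0∞) * ((K:ℕ):ℝ≥0∞)⁻¹ :=
            mul_le_mul_left (by exact_mod_cast hcardle) _
        _ = 1 := ENNReal.mul_inv_cancel hK0 hKtop
    have : (2:ℝ≥0∞) ≤ 1 := le_trans hbig hSig
    norm_num at this
  rw [Finset.mem_offDiag] at hprT
  obtain ⟨hx1, hx2, hx12⟩ := hprT
  have hfar : R ≤ G.dist pr.1 pr.2 := hTfar _ hx1 _ hx2 hx12
  have hcsmall : P p {ω | G.percConn ω pr.1 pr.2} ≤ ((m:ℕ):ℝ≥0∞)⁻¹ := by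
    rw [← hofε]
    exact hR pr.1 pr.2 hfar
  set B : Set (G.edgeSet → Bool) := {ω | (G.percCluster ω pr.1).Infinite ∧
      (G.percCluster ω pr.2).Infinite ∧ ¬ G.percConn ω pr.1 pr.2} with hBdef
  have hsplit : ({ω | (G.percCluster ω pr.1).Infinite} ∩ {ω | (G.percCluster ω pr.2).Infinite})
      ⊆ B ∪ {ω | G.percConn ω pr.1 pr.2} := by
    rintro ω ⟨h1, h2⟩
    by_cases hc : G.percConn ω pr.1 pr.2
    · exact Or.inr hc
    · exact Or.inl ⟨h1, h2, hc⟩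
  have hchain : ((K:ℕ):ℝ≥0∞)⁻¹ ≤ P p B + ((m:ℕ):ℝ≥0∞)⁻¹ :=
    le_trans hpr (le_trans (measure_mono hsplit)
      (le_trans (measure_union_le _ _) (add_le_add le_rfl hcsmall)))
  have hKm : ((m:ℕ):ℝ≥0∞)⁻¹ + ((m:ℕ):ℝ≥0∞)⁻¹ = ((K:ℕ):ℝ≥0∞)⁻¹ := by
    have hcast : ((m:ℕ):ℝ≥0∞) = 2 * ((K:ℕ):ℝ≥0∞) := by rw [hmdef]; push_cast; ring
    rw [hcast, ← two_mul, ENNReal.mul_inv (Or.inl (by norm_num)) (Or.inl (by norm_num)),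
      ← mul_assoc, ENNReal.mul_inv_cancel (by norm_num) (by norm_num), one_mul]
  have hBpos : 0 < P p B := by
    by_contra h0
    push_neg at h0
    have hB0 : P p B = 0 := le_zero_iff.1 h0
    rw [hB0, zero_add, ← hKm] at hchain
    have hmtop : ((m:ℕ):ℝ≥0∞)⁻¹ ≠ ∞ := by
      rw [ENNReal.inv_ne_top]
      exact Nat.cast_ne_zero.2 (Nat.pos_iff_ne_zero.1 hm0)
    have hmne : ((m:ℕ):ℝ≥0∞)⁻¹ ≠ 0 := by
      rw [ENNReal.inv_ne_zero]
      exact ENNReal.natCast_ne_top m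
    exact absurd hchain (not_le.2 (ENNReal.lt_add_right hmtop hmne))
  refine ⟨⟨pr.1, pr.2, hBpos⟩, lt_of_lt_of_le hBpos (measure_mono ?_)⟩
  rintro ω ⟨h1, h2, h3⟩
  exact ⟨pr.1, pr.2, h1, h2, h3⟩
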